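/- Let p < p' ≤ q' < q be natural numbers, and let a_p, a_q, a_{p'}, a_{q'} : ℝ → ℝ be functions such that for every h ≥ 0 and each n ∈ {p, q, p', q'}, the value a_n(h) is an n-th Robin parameter for h. If a_p(h*)² + a_q(h*)² = a_{p'}(h*)² + a_{q'}(h*)² for some h* ≥ 0, then for every h > h* one has a_p(h)² + a_q(h)² < a_{p'}(h)² + a_{q'}(h)². -/

import Mathlib

open Real

/-- `α` is an `n`-th Robin parameter for `h`: `nπ ≤ α < (n+1)π` and `α` satisfies
`α·sin(α/2) = hπ·cos(α/2)` if `n` is even, `α·cos(α/2) = −hπ·sin(α/2)` if `n` is odd. -/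
def IsRobinParam (n : ℕ) (h α : ℝ) : Prop :=
  (n : ℝ) * π ≤ α ∧ α < ((n : ℝ) + 1) * π ∧
    (if Even n then α * Real.sin (α / 2) = h * π * Real.cos (α / 2)
     else α * Real.cos (α / 2) = -(h * π) * Real.sin (α / 2))

open Set in
noncomputable def Gk (n : ℕ) (α : ℝ) : ℝ := α * Real.tan ((α - n * π) / 2)


open Set

lemma robin_iff (n : ℕ) (h α : ℝ) :
    IsRobinParam n h α ↔ ((n : ℝ) * π ≤ α ∧ α < ((n : ℝ) + 1) * π ∧ Gk n α = h * π) := by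
  have hb : ((n : ℝ) * π ≤ α ∧ α < ((n : ℝ) + 1) * π) →
      ((if Even n then α * Real.sin (α / 2) = h * π * Real.cos (α / 2)
       else α * Real.cos (α / 2) = -(h * π) * Real.sin (α / 2)) ↔ Gk n α = h * π) := by
    rintro ⟨hl, hr⟩
    rcases Nat.even_or_odd n with he | ho
    · obtain ⟨k, hk⟩ := he
      have hcos : Real.cos (α / 2) ≠ 0 := by
        intro h0
        obtain ⟨j, hj⟩ := Real.cos_eq_zero_iff.1 h0
        have hα : α = (2 * (j : ℝ) + 1) * π := by linarith [hj]
        have h1 : (n : ℝ) ≤ 2 * (j : ℝ) + 1 := by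
          rw [hα] at hl; nlinarith [Real.pi_pos]
        have h2 : 2 * (j : ℝ) + 1 < (n : ℝ) + 1 := by
          rw [hα] at hr; nlinarith [Real.pi_pos]
        have h1' : (n : ℤ) ≤ 2 * j + 1 := by exact_mod_cast h1
        have h2' : 2 * j + 1 < (n : ℤ) + 1 := by exact_mod_cast h2
        omega
      have hG : Gk n α = α * Real.sin (α / 2) / Real.cos (α / 2) := by
        unfold Gk
        have harg : (α - (n : ℝ) * π) / 2 = α / 2 - (k : ℝ) * π := by
          rw [hk]; push_cast; ring
        rw [harg, Real.tan_periodic.sub_nat_mul_eq, Real.tan_eq_sin_div_cos, mul_div_assoc']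
      rw [if_pos ⟨k, hk⟩, hG, div_eq_iff hcos]
    · have hsin : Real.sin (α / 2) ≠ 0 := by
        intro h0
        obtain ⟨j, hj⟩ := Real.sin_eq_zero_iff.1 h0
        have hα : α = 2 * (j : ℝ) * π := by linarith [hj]
        have h1 : (n : ℝ) ≤ 2 * (j : ℝ) := by
          rw [hα] at hl; nlinarith [Real.pi_pos]
        have h2 : 2 * (j : ℝ) < (n : ℝ) + 1 := by
          rw [hα] at hr; nlinarith [Real.pi_pos]
        have h1' : (n : ℤ) ≤ 2 * j := by exact_mod_cast h1
        have h2' : 2 * j < (n : ℤ) + 1 := by exact_mod_cast h2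
        obtain ⟨k, hk⟩ := ho
        omega
      obtain ⟨k, hk⟩ := ho
      have hG : Gk n α = -(α * Real.cos (α / 2)) / Real.sin (α / 2) := by
        unfold Gk
        have harg : (α - (n : ℝ) * π) / 2 = (α / 2 - π / 2) - (k : ℝ) * π := by
          rw [hk]; push_cast; ring
        rw [harg, Real.tan_periodic.sub_nat_mul_eq, Real.tan_eq_sin_div_cos]
        have hs : Real.sin (α / 2 - π / 2) = -Real.cos (α / 2) := by
          rw [show α / 2 - π / 2 = -(π / 2 - α / 2) by ring, Real.sin_neg,
            Real.sin_pi_div_two_sub]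
        have hc : Real.cos (α / 2 - π / 2) = Real.sin (α / 2) := by
          rw [show α / 2 - π / 2 = -(π / 2 - α / 2) by ring, Real.cos_neg,
            Real.cos_pi_div_two_sub]
        rw [hs, hc]; ring
      rw [if_neg (by simp [hk, parity_simps]), hG, div_eq_iff hsin]
      constructor <;> intro heq <;> linarith
  unfold IsRobinParam
  exact and_congr_right fun h1 => and_congr_right fun h2 => hb ⟨h1, h2⟩

lemma beta_mem {n : ℕ} {α : ℝ} (h1 : (n : ℝ) * π ≤ α) (h2 : α < ((n : ℝ) + 1) * π) :
    (α - n * π) / 2 ∈ Ico (0 : ℝ) (π / 2) := by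
  constructor
  · linarith
  · linarith

lemma Gk_strictMonoOn (n : ℕ) :
    StrictMonoOn (Gk n) (Ico ((n : ℝ) * π) (((n : ℝ) + 1) * π)) := by
  rintro a ⟨ha1, ha2⟩ b ⟨hb1, hb2⟩ hab
  have hpi := Real.pi_pos
  have hta : 0 ≤ Real.tan ((a - n * π) / 2) :=
    Real.tan_nonneg_of_nonneg_of_le_pi_div_two (by linarith) (by linarith)
  have htab : Real.tan ((a - n * π) / 2) < Real.tan ((b - n * π) / 2) := by
    apply Real.strictMonoOn_tan (by rw [Set.mem_Ioo]; constructor <;> linarith)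
      (by rw [Set.mem_Ioo]; constructor <;> linarith) (by linarith)
  have ha0 : 0 ≤ a := le_trans (by positivity) ha1
  unfold Gk
  nlinarith

lemma robin_unique {n : ℕ} {h α β : ℝ} (hα : IsRobinParam n h α) (hβ : IsRobinParam n h β) :
    α = β := by
  rw [robin_iff] at hα hβ
  exact (Gk_strictMonoOn n).injOn ⟨hα.1, hα.2.1⟩ ⟨hβ.1, hβ.2.1⟩ (by rw [hα.2.2, hβ.2.2])

section OneCurve

variable {n : ℕ} {a : ℝ → ℝ} (ha : ∀ h : ℝ, 0 ≤ h → IsRobinParam n h (a h))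

include ha

lemma a_mem {h : ℝ} (h0 : 0 ≤ h) : a h ∈ Ico ((n : ℝ) * π) (((n : ℝ) + 1) * π) :=
  ⟨((robin_iff n h (a h)).1 (ha h h0)).1, ((robin_iff n h (a h)).1 (ha h h0)).2.1⟩

lemma a_G {h : ℝ} (h0 : 0 ≤ h) : Gk n (a h) = h * π :=
  ((robin_iff n h (a h)).1 (ha h h0)).2.2

lemma a_mono : StrictMonoOn a (Ici 0) := by
  intro x hx y hy hxy
  have hG : Gk n (a x) < Gk n (a y) := by
    rw [a_G ha hx, a_G ha hy]
    exact mul_lt_mul_of_pos_right hxy Real.pi_pos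
  by_contra hcon
  exact absurd (((Gk_strictMonoOn n).le_iff_le (a_mem ha hy) (a_mem ha hx)).2
    (not_lt.1 hcon)) (not_le.2 hG)

lemma a_surj {γ : ℝ} (hγ : γ ∈ Ico ((n : ℝ) * π) (((n : ℝ) + 1) * π)) :
    ∃ c : ℝ, 0 ≤ c ∧ a c = γ := by
  have hpi := Real.pi_pos
  have hγ0 : 0 ≤ γ := le_trans (by positivity) hγ.1
  have hGnonneg : 0 ≤ Gk n γ := by
    have := beta_mem hγ.1 hγ.2
    have ht : 0 ≤ Real.tan ((γ - n * π) / 2) :=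
      Real.tan_nonneg_of_nonneg_of_le_pi_div_two this.1 this.2.le
    exact mul_nonneg hγ0 ht
  refine ⟨Gk n γ / π, div_nonneg hGnonneg hpi.le, ?_⟩
  have hrp : IsRobinParam n (Gk n γ / π) γ := by
    rw [robin_iff]
    exact ⟨hγ.1, hγ.2, by field_simp⟩
  exact robin_unique (ha _ (div_nonneg hGnonneg hpi.le)) hrp

lemma a_zero : a 0 = (n : ℝ) * π := by
  have hpi := Real.pi_pos
  have : IsRobinParam n 0 ((n : ℝ) * π) := by
    rw [robin_iff]
    refine ⟨le_refl _, by nlinarith, ?_⟩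
    unfold Gk
    simp
  exact robin_unique (ha 0 le_rfl) this

lemma a_pos_of_pos {h : ℝ} (h0 : 0 < h) : (n : ℝ) * π < a h := by
  have := a_mono ha (le_refl (0:ℝ)) h0.le h0
  rwa [a_zero ha] at this

lemma a_cont {z : ℝ} (hz : 0 ≤ z) : ContinuousWithinAt a (Ici 0) z := by
  have hpi := Real.pi_pos
  have hmem := a_mem ha hz
  have hfs_r : ∀ b > a z, ∃ c ∈ Ici (0:ℝ), a c ∈ Ioc (a z) b := by
    intro b hb
    set γ := min ((a z + b) / 2) ((a z + ((n : ℝ) + 1) * π) / 2) with hγdef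
    have hγ1 : a z < γ := by
      apply lt_min <;> [linarith; linarith [hmem.2]]
    have hγmem : γ ∈ Ico ((n : ℝ) * π) (((n : ℝ) + 1) * π) := by
      constructor
      · exact le_trans hmem.1 hγ1.le
      · calc γ ≤ (a z + ((n : ℝ) + 1) * π) / 2 := min_le_right _ _
          _ < ((n : ℝ) + 1) * π := by linarith [hmem.2]
    obtain ⟨c, hc0, hc⟩ := a_surj ha hγmem
    refine ⟨c, hc0, ?_⟩
    rw [hc]
    exact ⟨hγ1, le_trans (min_le_left _ _) (by linarith)⟩
  rcases eq_or_lt_of_le hz with rfl | hz'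
  · exact (a_mono ha).continuousWithinAt_right_of_exists_between self_mem_nhdsWithin hfs_r
  · have hfs_l : ∀ b < a z, ∃ c ∈ Ici (0:ℝ), a c ∈ Ico b (a z) := by
      intro b hb
      have haz : (n : ℝ) * π < a z := a_pos_of_pos ha hz'
      have hγmem : max b ((n : ℝ) * π) ∈ Ico ((n : ℝ) * π) (((n : ℝ) + 1) * π) :=
        ⟨le_max_right _ _, by rw [max_lt_iff]; exact ⟨lt_trans hb hmem.2, lt_of_le_of_lt hmem.1 hmem.2⟩⟩
      obtain ⟨c, hc0, hc⟩ := a_surj ha hγmem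
      exact ⟨c, hc0, by rw [hc]; exact ⟨le_max_left _ _, max_lt hb haz⟩⟩
    exact ((a_mono ha).continuousAt_of_exists_between (Ici_mem_nhds hz') hfs_l
      hfs_r).continuousWithinAt

end OneCurve

section Deriv

variable {n : ℕ} {a : ℝ → ℝ} (ha : ∀ h : ℝ, 0 ≤ h → IsRobinParam n h (a h))

include ha

lemma a_sq_hasDerivAt {z : ℝ} (hz : 0 < z) :
    HasDerivAt (fun y => (a y) ^ 2)
      (4 * π * (a z) ^ 2 / ((a z) ^ 2 + 2 * z * π + z ^ 2 * π ^ 2)) z := by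
  have hpi := Real.pi_pos
  set α0 := a z with hα0def
  have hmem := a_mem ha hz.le
  have hlt : (n : ℝ) * π < α0 := a_pos_of_pos ha hz
  have hα0pos : 0 < α0 := lt_of_le_of_lt (by positivity) hlt
  set β0 := (α0 - (n : ℝ) * π) / 2 with hβ0def
  have hβ0pos : 0 < β0 := by rw [hβ0def]; linarith
  have hβ0lt : β0 < π / 2 := by rw [hβ0def]; linarith [hmem.2]
  have hcos : 0 < Real.cos β0 := Real.cos_pos_of_mem_Ioo ⟨by linarith, hβ0lt⟩
  have htan : 0 < Real.tan β0 := Real.tan_pos_of_pos_of_lt_pi_div_two hβ0pos hβ0lt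
  -- derivative of Gk n at α0
  have h1 : HasDerivAt (fun α : ℝ => (α - (n : ℝ) * π) / 2) (1 / 2) α0 := by
    simpa using ((hasDerivAt_id α0).sub_const ((n : ℝ) * π)).div_const 2
  have h2 : HasDerivAt Real.tan (1 / Real.cos β0 ^ 2) β0 := Real.hasDerivAt_tan hcos.ne'
  have h3 : HasDerivAt (fun α : ℝ => Real.tan ((α - (n : ℝ) * π) / 2))
      (1 / Real.cos β0 ^ 2 * (1 / 2)) α0 := by
    have := h2.comp α0 h1
    exact this
  set w := Real.tan β0 + α0 * (1 / Real.cos β0 ^ 2 * (1 / 2)) with hwdef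
  have h4 : HasDerivAt (Gk n) w α0 := by
    have := (hasDerivAt_id α0).mul h3
    have e : Gk n = fun α => id α * Real.tan ((α - (n : ℝ) * π) / 2) := by funext α; rfl
    rw [e]
    refine this.congr_deriv ?_
    simp [hwdef, hβ0def]
  have hwpos : 0 < w := by
    have : 0 < 1 / Real.cos β0 ^ 2 := by positivity
    rw [hwdef]; positivity
  -- inverse function derivative
  have hf : HasDerivAt (fun α => Gk n α / π) (w / π) α0 := h4.div_const π
  have hcontz : ContinuousAt a z := (a_cont ha hz.le).continuousAt (Ici_mem_nhds hz)
  have hfg : ∀ᶠ y in nhds z, Gk n (a y) / π = y := by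
    filter_upwards [Ioi_mem_nhds hz] with y hy
    rw [a_G ha (le_of_lt hy)]
    field_simp
  have hda : HasDerivAt a ((w / π)⁻¹) z :=
    HasDerivAt.of_local_left_inverse hcontz hf (by positivity) hfg
  have hsq : HasDerivAt (fun y => (a y) ^ 2) (2 * α0 * (w / π)⁻¹) z := by
    have := hda.fun_pow 2
    refine this.congr_deriv ?_
    norm_num [hα0def]
  convert hsq using 1
  -- algebra: rewrite the derivative
  have htaneq : Real.tan β0 = z * π / α0 := by
    have hG := a_G ha hz.le
    rw [← hα0def] at hG
    unfold Gk at hG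
    rw [← hβ0def] at hG
    field_simp
    linarith [hG]
  have hsec : 1 / Real.cos β0 ^ 2 = 1 + Real.tan β0 ^ 2 := by
    rw [Real.tan_eq_sin_div_cos]
    field_simp
    try nlinarith [Real.sin_sq_add_cos_sq β0]
  have hw : w = (α0 ^ 2 + 2 * z * π + z ^ 2 * π ^ 2) / (2 * α0) := by
    rw [hwdef, hsec, htaneq]
    field_simp
    ring
  rw [hw]
  have hden : 0 < α0 ^ 2 + 2 * z * π + z ^ 2 * π ^ 2 := by positivity
  field_simp
  ring

end Deriv

lemma keyIneq {A B C D c : ℝ} (hA : 0 ≤ A) (hAB : A < B) (hBC : B ≤ C) (hCD : C < D)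
    (hc : 0 < c) (hC : π ^ 2 ≤ C) (hg : B + C - A - D ≤ 0) :
    4 / π * (B + C - A - D) <
      4 * π * B / (B + c) + 4 * π * C / (C + c) - 4 * π * A / (A + c) - 4 * π * D / (D + c) := by
  have hpi := Real.pi_pos
  have hA' : 0 < A + c := by linarith
  have hB' : 0 < B + c := by linarith
  have hC' : 0 < C + c := by linarith
  have hD' : 0 < D + c := by linarith
  have hprod : (A + c) * (B + c) < (C + c) * (D + c) := by nlinarith
  have key : 4 * π * B / (B + c) + 4 * π * C / (C + c) - 4 * π * A / (A + c)
        - 4 * π * D / (D + c)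
      = 4 * π * c * (B - A) * ((C + c) * (D + c) - (A + c) * (B + c))
          / ((A + c) * (B + c) * ((C + c) * (D + c)))
        + 4 * π * c * (B + C - A - D) / ((C + c) * (D + c)) := by
    field_simp
    ring
  have t1 : 0 < 4 * π * c * (B - A) * ((C + c) * (D + c) - (A + c) * (B + c))
      / ((A + c) * (B + c) * ((C + c) * (D + c))) := by
    apply div_pos
    · have : 0 < B - A := by linarith
      have : 0 < (C + c) * (D + c) - (A + c) * (B + c) := by linarith
      positivity
    · positivity
  have t2 : 4 / π * (B + C - A - D) ≤ 4 * π * c * (B + C - A - D) / ((C + c) * (D + c)) := by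
    rw [div_mul_eq_mul_div, div_le_div_iff₀ hpi (by positivity)]
    have hπc : π ^ 2 * c ≤ (C + c) * (D + c) := by nlinarith
    nlinarith [mul_nonneg (neg_nonneg.2 hg) (sub_nonneg.2 hπc)]
  linarith

set_option maxHeartbeats 1000000 in
theorem stmt_5 (p p' q' q : ℕ) (h1 : p < p') (h2 : p' ≤ q') (h3 : q' < q)
    (ap aq ap' aq' : ℝ → ℝ)
    (hap : ∀ h : ℝ, 0 ≤ h → IsRobinParam p h (ap h))
    (haq : ∀ h : ℝ, 0 ≤ h → IsRobinParam q h (aq h))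
    (hap' : ∀ h : ℝ, 0 ≤ h → IsRobinParam p' h (ap' h))
    (haq' : ∀ h : ℝ, 0 ≤ h → IsRobinParam q' h (aq' h))
    (hstar : ℝ) (hstar0 : 0 ≤ hstar)
    (hcross : (ap hstar) ^ 2 + (aq hstar) ^ 2 = (ap' hstar) ^ 2 + (aq' hstar) ^ 2) :
    ∀ h : ℝ, hstar < h → (ap h) ^ 2 + (aq h) ^ 2 < (ap' h) ^ 2 + (aq' h) ^ 2 := by
  intro h hh
  by_contra hcon
  push_neg at hcon
  have hpi := Real.pi_pos
  set gfun : ℝ → ℝ := fun y => ap' y ^ 2 + aq' y ^ 2 - ap y ^ 2 - aq y ^ 2 with hgdef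
  set mfun : ℝ → ℝ := fun y => gfun y * Real.exp (-(4 / π) * y) with hmdef
  have hgstar : gfun hstar = 0 := by simp only [hgdef]; linarith
  have hgh : gfun h ≤ 0 := by simp only [hgdef]; linarith
  have hmstar : mfun hstar = 0 := by simp only [hmdef, hgstar, zero_mul]
  have hmh : mfun h ≤ 0 := mul_nonpos_of_nonpos_of_nonneg hgh (Real.exp_nonneg _)
  -- the key derivative estimate
  have inner : ∀ y : ℝ, 0 < y → gfun y ≤ 0 → ∃ d : ℝ, HasDerivAt mfun d y ∧ 0 < d := by
    intro y hy hgy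
    have hdp := a_sq_hasDerivAt hap hy
    have hdq := a_sq_hasDerivAt haq hy
    have hdp' := a_sq_hasDerivAt hap' hy
    have hdq' := a_sq_hasDerivAt haq' hy
    set A := (ap y) ^ 2 with hAdef
    set B := (ap' y) ^ 2 with hBdef
    set C := (aq' y) ^ 2 with hCdef
    set D := (aq y) ^ 2 with hDdef
    set c : ℝ := 2 * y * π + y ^ 2 * π ^ 2 with hcdef
    have hmemp := a_mem hap hy.le
    have hmemq := a_mem haq hy.le
    have hmemp' := a_mem hap' hy.le
    have hmemq' := a_mem haq' hy.le
    have hp0 : 0 ≤ ap y := le_trans (by positivity) hmemp.1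
    have hp'0 : 0 ≤ ap' y := le_trans (by positivity) hmemp'.1
    have hq'0 : 0 ≤ aq' y := le_trans (by positivity) hmemq'.1
    have happ' : ap y < ap' y := by
      have hcast : (p : ℝ) + 1 ≤ (p' : ℝ) := by exact_mod_cast h1
      calc ap y < ((p : ℝ) + 1) * π := hmemp.2
        _ ≤ (p' : ℝ) * π := mul_le_mul_of_nonneg_right hcast hpi.le
        _ ≤ ap' y := hmemp'.1
    have hq'q : aq' y < aq y := by
      have hcast : (q' : ℝ) + 1 ≤ (q : ℝ) := by exact_mod_cast h3
      calc aq' y < ((q' : ℝ) + 1) * π := hmemq'.2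
        _ ≤ (q : ℝ) * π := mul_le_mul_of_nonneg_right hcast hpi.le
        _ ≤ aq y := hmemq.1
    have hp'q' : ap' y ≤ aq' y := by
      rcases eq_or_lt_of_le h2 with heq | hlt2
      · exact le_of_eq (robin_unique (hap' y hy.le) (heq ▸ haq' y hy.le))
      · refine le_of_lt ?_
        have hcast : (p' : ℝ) + 1 ≤ (q' : ℝ) := by exact_mod_cast hlt2
        calc ap' y < ((p' : ℝ) + 1) * π := hmemp'.2
          _ ≤ (q' : ℝ) * π := mul_le_mul_of_nonneg_right hcast hpi.le
          _ ≤ aq' y := hmemq'.1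
    have hAB : A < B := by rw [hAdef, hBdef]; exact pow_lt_pow_left₀ happ' hp0 (by norm_num)
    have hBC : B ≤ C := by rw [hBdef, hCdef]; exact pow_le_pow_left₀ hp'0 hp'q' 2
    have hCD : C < D := by rw [hCdef, hDdef]; exact pow_lt_pow_left₀ hq'q hq'0 (by norm_num)
    have hA : 0 ≤ A := by rw [hAdef]; positivity
    have hc : 0 < c := by rw [hcdef]; positivity
    have hπC : π ^ 2 ≤ C := by
      have hq'1 : (1 : ℝ) ≤ (q' : ℝ) := by
        have h1q : 1 ≤ q' := by omega
        exact_mod_cast h1q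
      have hπa : π ≤ aq' y :=
        le_trans (le_trans (by linarith) (mul_le_mul_of_nonneg_right hq'1 hpi.le)) hmemq'.1
      rw [hCdef]; exact pow_le_pow_left₀ hpi.le hπa 2
    have hgval : gfun y = B + C - A - D := by rw [hgdef]
    -- derivative of gfun
    set gd : ℝ := 4 * π * B / (B + 2 * y * π + y ^ 2 * π ^ 2)
        + 4 * π * C / (C + 2 * y * π + y ^ 2 * π ^ 2)
        - 4 * π * A / (A + 2 * y * π + y ^ 2 * π ^ 2)
        - 4 * π * D / (D + 2 * y * π + y ^ 2 * π ^ 2) with hgddef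
    have hgd : HasDerivAt gfun gd y := ((hdp'.add hdq').sub hdp).sub hdq
    have hkey : 4 / π * gfun y < gd := by
      have hk := keyIneq hA hAB hBC hCD hc hπC (by rw [← hgval]; exact hgy)
      rw [hgval, hgddef]
      calc 4 / π * (B + C - A - D)
          < 4 * π * B / (B + c) + 4 * π * C / (C + c) - 4 * π * A / (A + c)
            - 4 * π * D / (D + c) := hk
        _ = 4 * π * B / (B + 2 * y * π + y ^ 2 * π ^ 2)
            + 4 * π * C / (C + 2 * y * π + y ^ 2 * π ^ 2)
            - 4 * π * A / (A + 2 * y * π + y ^ 2 * π ^ 2)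
            - 4 * π * D / (D + 2 * y * π + y ^ 2 * π ^ 2) := by rw [hcdef]; ring_nf
    -- derivative of mfun
    have hexp : HasDerivAt (fun x : ℝ => Real.exp (-(4 / π) * x))
        (Real.exp (-(4 / π) * y) * (-(4 / π))) y := by
      simpa using ((hasDerivAt_id y).const_mul (-(4 / π))).exp
    have hmd : HasDerivAt mfun (gd * Real.exp (-(4 / π) * y)
        + gfun y * (Real.exp (-(4 / π) * y) * (-(4 / π)))) y := hgd.mul hexp
    refine ⟨_, hmd, ?_⟩
    have hE : 0 < Real.exp (-(4 / π) * y) := Real.exp_pos _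
    have heq2 : gd * Real.exp (-(4 / π) * y) + gfun y * (Real.exp (-(4 / π) * y) * (-(4 / π)))
        = (gd - 4 / π * gfun y) * Real.exp (-(4 / π) * y) := by ring
    rw [heq2]
    have hpos : 0 < gd - 4 / π * gfun y := by linarith
    positivity
  -- continuity of mfun on [hstar, h]
  have hsub : Icc hstar h ⊆ Ici (0 : ℝ) := fun x hx => le_trans hstar0 hx.1
  have hcont : ContinuousOn mfun (Icc hstar h) := by
    have cap : ContinuousOn ap (Ici (0:ℝ)) := fun z hz => a_cont hap hz
    have caq : ContinuousOn aq (Ici (0:ℝ)) := fun z hz => a_cont haq hz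
    have cap' : ContinuousOn ap' (Ici (0:ℝ)) := fun z hz => a_cont hap' hz
    have caq' : ContinuousOn aq' (Ici (0:ℝ)) := fun z hz => a_cont haq' hz
    have cg : ContinuousOn gfun (Ici (0:ℝ)) :=
      (((cap'.pow 2).add (caq'.pow 2)).sub (cap.pow 2)).sub (caq.pow 2)
    have ce : Continuous fun x : ℝ => Real.exp (-(4 / π) * x) :=
      Real.continuous_exp.comp (continuous_const.mul continuous_id)
    exact (cg.mono hsub).mul ce.continuousOn
  -- minimum argument
  obtain ⟨z, hzmem, hzmin⟩ := isCompact_Icc.exists_isMinOn ⟨hstar, le_refl _, hh.le⟩ hcont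
  have hend : IsMinOn mfun (Icc hstar h) h → False := by
    intro hmin
    obtain ⟨d, hmd, hd⟩ := inner h (lt_of_le_of_lt hstar0 hh) hgh
    have hslope := hasDerivAt_iff_tendsto_slope.1 hmd
    have hev : ∀ᶠ x in nhdsWithin h {h}ᶜ, 0 < slope mfun h x :=
      hslope.eventually (eventually_gt_nhds hd)
    have hev2 : ∀ᶠ x in nhdsWithin h (Iio h), 0 < slope mfun h x :=
      hev.filter_mono (nhdsWithin_mono h fun x hx => ne_of_lt hx)
    have hev3 : ∀ᶠ x in nhdsWithin h (Iio h), x ∈ Ioo hstar h :=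
      Ioo_mem_nhdsLT_of_mem ⟨hh, le_refl _⟩
    obtain ⟨x, hx1, hx2⟩ := (hev2.and hev3).exists
    rw [slope_def_field] at hx1
    have hxm : mfun x < mfun h := by
      rcases div_pos_iff.1 hx1 with ⟨_, hb⟩ | ⟨ha, _⟩
      · linarith [hx2.2, hb]
      · linarith [ha]
    exact absurd (isMinOn_iff.1 hmin x ⟨hx2.1.le, hx2.2.le⟩) (not_le.2 hxm)
  rcases eq_or_lt_of_le hzmem.1 with hzstar | hzpos'
  · -- min at hstar: value 0, so mfun h = 0 and min also at h
    have hge : ∀ x ∈ Icc hstar h, 0 ≤ mfun x := by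
      intro x hx
      have := isMinOn_iff.1 hzmin x hx
      rw [← hzstar, hmstar] at this
      exact this
    have hmh0 : mfun h = 0 := le_antisymm hmh (hge h ⟨hh.le, le_refl _⟩)
    exact hend (isMinOn_iff.2 fun x hx => by rw [hmh0]; exact hge x hx)
  rcases eq_or_lt_of_le hzmem.2 with hzh | hzlt
  · exact hend (hzh ▸ hzmin)
  · -- interior minimum
    have hz0 : 0 < z := lt_of_le_of_lt hstar0 hzpos'
    have hmz : mfun z ≤ 0 := le_trans (isMinOn_iff.1 hzmin h ⟨hh.le, le_refl _⟩) hmh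
    have hgz : gfun z ≤ 0 := by
      by_contra hcon2
      push_neg at hcon2
      have : 0 < mfun z := mul_pos hcon2 (Real.exp_pos _)
      linarith
    obtain ⟨d, hmd, hd⟩ := inner z hz0 hgz
    have hloc : IsLocalMin mfun z := hzmin.isLocalMin (Icc_mem_nhds hzpos' hzlt)
    have := hloc.hasDerivAt_eq_zero hmd
    linarith
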